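/- The bicyclic monoid B = ⟨a, b ∣ ab = 1⟩ has a faithful tropical linear representation of dimension 2: there exists an injective multiplicative-semigroup homomorphism R : B → M_2(𝕋) with R(a) = [[−1, 1],[−∞, 1]], R(b) = [[1, 1],[−∞, −1]], and R(1) = [[0,0],[−∞,0]] (so R(b)^i·R(a)^j, products taken tropically, represents b^i a^j, and distinct elements of B have distinct images). -/

import Mathlib

/-- The tropical semiring `𝕋 = ℝ ∪ {−∞}` (addition = max, multiplication = +,
with `⊥ = −∞` absorbing for `+`). -/
abbrev Trop : Type := WithBot ℝ

/-- Tropical product of 2×2 matrices: `(A⊙B)_{ik} = max_j (a_{ij} + b_{jk})`. -/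
noncomputable def tmul (A B : Matrix (Fin 2) (Fin 2) Trop) : Matrix (Fin 2) (Fin 2) Trop :=
  Matrix.of fun i k => max (A i 0 + B 0 k) (A i 1 + B 1 k)

/-- The single defining relation of the bicyclic monoid `⟨a, b ∣ ab = 1⟩`:
the word `ab` (here `a` is generator `0` and `b` is generator `1`) equals the empty word. -/
def bicyclicRel : FreeMonoid (Fin 2) → FreeMonoid (Fin 2) → Prop :=
  fun u v => u = FreeMonoid.of 0 * FreeMonoid.of 1 ∧ v = 1

/-- The bicyclic monoid `B = ⟨a, b ∣ ab = 1⟩`, as a presented monoid. -/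
abbrev Bicyclic : Type := PresentedMonoid bicyclicRel

namespace Stmt18Aux

structure BN where
  i : ℕ
  j : ℕ

def bmul (p q : BN) : BN := ⟨p.i + (q.i - p.j), q.j + (p.j - q.i)⟩

instance : Monoid BN where
  mul := bmul
  one := ⟨0, 0⟩
  mul_assoc p q r := by
    show bmul (bmul p q) r = bmul p (bmul q r)
    simp only [bmul, BN.mk.injEq]
    omega
  one_mul p := by show bmul ⟨0,0⟩ p = p; cases p; simp [bmul]
  mul_one p := by show bmul p ⟨0,0⟩ = p; cases p; simp [bmul]

lemma mul_def (p q : BN) : p * q = ⟨p.i + (q.i - p.j), q.j + (p.j - q.i)⟩ := rfl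

lemma one_def : (1 : BN) = ⟨0, 0⟩ := rfl

def fgen : Fin 2 → BN := ![⟨0,1⟩, ⟨1,0⟩]

lemma hrel : ∀ u v : FreeMonoid (Fin 2), bicyclicRel u v →
    FreeMonoid.lift fgen u = FreeMonoid.lift fgen v := by
  rintro u v ⟨rfl, rfl⟩
  simp only [map_mul, map_one, FreeMonoid.lift_eval_of]
  rfl

noncomputable def π : Bicyclic →* BN := PresentedMonoid.lift fgen hrel

abbrev oF (g : Fin 2) : Bicyclic := PresentedMonoid.of bicyclicRel g

lemma a_mul_b : oF 0 * oF 1 = 1 :=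
  (Con.eq _).mpr (ConGen.Rel.of _ _ ⟨rfl, rfl⟩)

noncomputable def σ (p : BN) : Bicyclic := (oF 1) ^ p.i * (oF 0) ^ p.j

lemma σ_gen (g : Fin 2) (p : BN) : σ (fgen g * p) = oF g * σ p := by
  obtain ⟨i, j⟩ := p
  fin_cases g
  · cases i with
    | zero =>
      show σ ⟨0 + (0 - 1), j + (1 - 0)⟩ = oF 0 * σ ⟨0, j⟩
      simp [σ, pow_succ']
    | succ k =>
      show σ ⟨0 + (k + 1 - 1), j + (1 - (k + 1))⟩ = oF 0 * σ ⟨k + 1, j⟩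
      simp only [σ, pow_succ']
      rw [← mul_assoc, ← mul_assoc, a_mul_b, one_mul]
      simp
  · show σ ⟨1 + (i - 0), j + (0 - i)⟩ = oF 1 * σ ⟨i, j⟩
    simp [σ, pow_succ', mul_assoc, pow_add]

lemma retr (x : Bicyclic) : σ (π x) = x := by
  obtain ⟨w, rfl⟩ := PresentedMonoid.surjective_mk (rels := bicyclicRel) x
  induction w using FreeMonoid.inductionOn' with
  | one => simp [map_one, σ, one_def]
  | of_mul g w ih =>
    rw [map_mul, map_mul]
    have : π (PresentedMonoid.mk bicyclicRel (FreeMonoid.of g)) = fgen g := rfl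
    rw [this, σ_gen, ih]
    rfl

noncomputable def Mt (p : BN) : Matrix (Fin 2) (Fin 2) Trop :=
  !![(((p.i : ℝ) - (p.j : ℝ) : ℝ) : Trop), (((p.i : ℝ) + (p.j : ℝ) : ℝ) : Trop);
     (⊥ : Trop), (((p.j : ℝ) - (p.i : ℝ) : ℝ) : Trop)]

lemma Mt_inj : Function.Injective Mt := by
  intro p q h
  obtain ⟨a, b⟩ := p; obtain ⟨c, d⟩ := q
  have h00 := congrFun (congrFun h 0) 0
  have h01 := congrFun (congrFun h 0) 1
  simp [Mt] at h00 h01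
  have h00' : (a : ℝ) - b = c - d := by exact_mod_cast h00
  have h01' : (a : ℝ) + b = c + d := by exact_mod_cast h01
  simp only [BN.mk.injEq]
  constructor
  · have : (a : ℝ) = c := by linarith
    exact_mod_cast this
  · have : (b : ℝ) = d := by linarith
    exact_mod_cast this

lemma key (p q : BN) : Mt (p * q) = tmul (Mt p) (Mt q) := by
  obtain ⟨a, b⟩ := p; obtain ⟨c, d⟩ := q
  rw [mul_def]
  ext r s
  fin_cases r <;> fin_cases s <;>
    simp only [Fin.mk_zero, Fin.mk_one, Mt, tmul, Matrix.of_apply, Matrix.cons_val',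
      Matrix.cons_val_zero, Matrix.cons_val_one, Matrix.head_cons, Matrix.empty_val',
      Matrix.cons_val_fin_one, Matrix.head_fin_const] <;>
    rcases le_total b c with h | h <;>
    simp only [WithBot.add_bot, WithBot.bot_add, bot_sup_eq, sup_bot_eq,
      ← WithBot.coe_add, ← WithBot.coe_sup, WithBot.coe_eq_coe] <;>
    push_cast [Nat.sub_eq_zero_of_le h, Nat.cast_sub h] <;>
    first
      | rfl
      | (have h' := (Nat.cast_le (α := ℝ)).mpr h; linarith)
      | (have h' := (Nat.cast_le (α := ℝ)).mpr h; rw [max_def];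
         split_ifs <;> linarith)


lemma Mt_val (p : BN) (m : Matrix (Fin 2) (Fin 2) Trop)
    (h00 : ((p.i : ℝ) - (p.j : ℝ) : ℝ) = m 0 0 ∧ ((p.i : ℝ) + (p.j : ℝ) : ℝ) = m 0 1 ∧
      (⊥ : Trop) = m 1 0 ∧ ((p.j : ℝ) - (p.i : ℝ) : ℝ) = m 1 1) : Mt p = m := by
  ext r s
  fin_cases r <;> fin_cases s <;>
    simp only [Fin.mk_zero, Fin.mk_one, Mt, Matrix.cons_val', Matrix.cons_val_zero,
      Matrix.cons_val_one, Matrix.head_cons, Matrix.empty_val', Matrix.cons_val_fin_one,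
      Matrix.head_fin_const]
  · exact_mod_cast h00.1
  · exact_mod_cast h00.2.1
  · exact h00.2.2.1
  · exact h00.2.2.2

end Stmt18Aux

open Stmt18Aux in
/-- The bicyclic monoid has a faithful 2-dimensional tropical linear representation:
an injective multiplicative map `R : B → M₂(𝕋)` (a semigroup homomorphism for the
tropical matrix product) with `R a = [[−1,1],[−∞,1]]`, `R b = [[1,1],[−∞,−1]]` and
`R 1 = [[0,0],[−∞,0]]`. -/
theorem stmt18 :
    ∃ R : Bicyclic → Matrix (Fin 2) (Fin 2) Trop,
      Function.Injective R ∧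
      (∀ x y : Bicyclic, R (x * y) = tmul (R x) (R y)) ∧
      R (PresentedMonoid.of bicyclicRel 0) =
        !![((-1 : ℝ) : Trop), ((1 : ℝ) : Trop); (⊥ : Trop), ((1 : ℝ) : Trop)] ∧
      R (PresentedMonoid.of bicyclicRel 1) =
        !![((1 : ℝ) : Trop), ((1 : ℝ) : Trop); (⊥ : Trop), ((-1 : ℝ) : Trop)] ∧
      R 1 = !![(0 : Trop), (0 : Trop); (⊥ : Trop), (0 : Trop)] := by

  refine ⟨fun x => Mt (π x), ?_, ?_, ?_, ?_, ?_⟩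
  · intro x y hxy
    have h := Mt_inj hxy
    calc x = σ (π x) := (retr x).symm
    _ = σ (π y) := by rw [h]
    _ = y := retr y
  · intro x y
    show Mt (π (x * y)) = _
    rw [map_mul, key]
  · show Mt (π (oF 0)) = _
    have h : π (oF 0) = (⟨0, 1⟩ : BN) := rfl
    rw [h]
    apply Mt_val
    norm_num [Matrix.cons_val_zero, Matrix.cons_val_one, Matrix.head_cons]
  · show Mt (π (oF 1)) = _
    have h : π (oF 1) = (⟨1, 0⟩ : BN) := rfl
    rw [h]
    apply Mt_val
    norm_num [Matrix.cons_val_zero, Matrix.cons_val_one, Matrix.head_cons]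
  · show Mt (π 1) = _
    rw [map_one]
    have h : (1 : BN) = (⟨0, 0⟩ : BN) := rfl
    rw [h]
    apply Mt_val
    norm_num [Matrix.cons_val_zero, Matrix.cons_val_one, Matrix.head_cons]
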